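/- Let M ≥ 2 be an integer, h = 1/M, τ > 0, x_i = i·h, D_i = x_i(1 − x_i), and λ₀ = (4/h²)·sin²(π/(2M)). Suppose the interior vector (f'_1,…,f'_{M−1}) satisfies the implicit interior Scheme 3 equations (f'_i − f_i)/τ − (D_{i+1} f'_{i+1} − 2D_i f'_i + D_{i−1} f'_{i−1})/h² = 0 for i = 1,…,M−1 (with D_0 f'_0 and D_M f'_M interpreted as 0). Then the weighted discrete L² quantity decays geometrically: Σ_{i=1}^{M−1} D_i (f'_i)² h ≤ (1 + 2 τ λ₀ h(1−h))^{−1} · Σ_{i=1}^{M−1} D_i (f_i)² h. -/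

import Mathlib

open Finset Real

private lemma scheme3_shift (M : ℕ) (F : ℕ → ℝ) :
    ∑ i ∈ Ico 1 (M-1), F (i+1) = ∑ i ∈ Ico 2 M, F i := by
  rw [Finset.sum_Ico_eq_sum_range, Finset.sum_Ico_eq_sum_range]
  rw [show M - 1 - 1 = M - 2 from by omega]
  exact Finset.sum_congr rfl (fun j _ => by rw [show 1 + j + 1 = 2 + j from by omega])

private lemma scheme3_amgm (a b x y : ℝ) (ha : 0 < a) (hb : 0 < b) :
    x * y ≤ (b / a * x ^ 2 + a / b * y ^ 2) / 2 := by
  rw [← sub_nonneg]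
  have e : (b / a * x ^ 2 + a / b * y ^ 2) / 2 - x * y = (b * x - a * y) ^ 2 / (2 * a * b) := by
    field_simp; ring
  rw [e]; positivity

set_option maxHeartbeats 1000000 in
/-- One-step geometric decay of the weighted discrete `L²` energy
`Σ_{i=1}^{M−1} D_i f_i² h` for the implicit interior Scheme 3, with decay factor
`(1 + 2τλ₀h(1−h))⁻¹`, where `λ₀ = (4/h²) sin²(π/(2M))`, `D_i = x_i(1−x_i)`,
`x_i = i·h`, `h = 1/M`. -/
theorem scheme3_weighted_l2_decay
    (M : ℕ) (hM : 2 ≤ M) (h τ lam0 : ℝ) (hh : h = 1 / (M : ℝ)) (hτ : 0 < τ)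
    (hlam0 : lam0 = 4 / h ^ 2 * Real.sin (Real.pi / (2 * (M : ℝ))) ^ 2)
    (f f' : ℕ → ℝ)
    (heq : ∀ i, 1 ≤ i → i ≤ M - 1 →
      (f' i - f i) / τ
        - ((((i : ℝ) + 1) * h * (1 - ((i : ℝ) + 1) * h)) * f' (i + 1)
            - 2 * ((i : ℝ) * h * (1 - (i : ℝ) * h)) * f' i
            + (((i : ℝ) - 1) * h * (1 - ((i : ℝ) - 1) * h)) * f' (i - 1)) / h ^ 2 = 0) :
    ∑ i ∈ Finset.Ico 1 M, ((i : ℝ) * h * (1 - (i : ℝ) * h)) * f' i ^ 2 * h ≤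
      (1 + 2 * τ * lam0 * (h * (1 - h)))⁻¹ *
        ∑ i ∈ Finset.Ico 1 M, ((i : ℝ) * h * (1 - (i : ℝ) * h)) * f i ^ 2 * h := by
  have hMR : (2:ℝ) ≤ (M:ℝ) := by exact_mod_cast hM
  have hM0 : (0:ℝ) < (M:ℝ) := by linarith
  have hhpos : 0 < h := by rw [hh]; positivity
  have hMh : (M:ℝ) * h = 1 := by rw [hh]; field_simp
  have hhalf : h ≤ 1/2 := by rw [hh]; rw [div_le_div_iff₀ hM0 (by norm_num)]; linarith
  have h1h : 0 < 1 - h := by linarith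
  set θ : ℝ := Real.pi / M with hθ
  have hθpos : 0 < θ := by positivity
  have hθle : θ ≤ Real.pi / 2 := by
    rw [hθ, div_le_div_iff₀ hM0 (by norm_num)]
    nlinarith [Real.pi_pos]
  set c : ℝ := Real.cos θ with hc
  -- λ₀ in terms of c
  have hsinpos : 0 < Real.sin (Real.pi / (2 * (M:ℝ))) := by
    apply Real.sin_pos_of_pos_of_lt_pi
    · positivity
    · rw [div_lt_iff₀ (by positivity)]
      nlinarith [Real.pi_pos]
  have hlamc : lam0 * h ^ 2 = 2 * (1 - c) := by
    have hdb : c = 1 - 2 * Real.sin (Real.pi / (2 * (M:ℝ))) ^ 2 := by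
      rw [hc, hθ, show Real.pi / (M:ℝ) = 2 * (Real.pi / (2 * (M:ℝ))) from by
        field_simp]
      rw [Real.cos_two_mul, Real.sin_sq]; ring
    rw [hlam0, hdb]; field_simp; ring
  have hlampos : 0 < lam0 := by
    rw [hlam0]; positivity
  -- the diffusion coefficient and the weighted unknown
  set D : ℕ → ℝ := fun i => (i:ℝ) * h * (1 - (i:ℝ) * h) with hD
  set v : ℕ → ℝ := fun i => D i * f' i with hv
  have hv0 : v 0 = 0 := by simp [hv, hD]
  have hvM : v M = 0 := by simp [hv, hD, hMh]
  have hDlb : ∀ i ∈ Ico 1 M, h * (1 - h) ≤ D i := by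
    intro i hi
    rw [mem_Ico] at hi
    have h1 : (1:ℝ) ≤ (i:ℝ) := by exact_mod_cast hi.1
    have h2 : (i:ℝ) ≤ (M:ℝ) - 1 := by
      have : (i:ℝ) + 1 ≤ (M:ℝ) := by exact_mod_cast hi.2
      linarith
    have hx1 : h ≤ (i:ℝ) * h := by nlinarith
    have hx2 : (i:ℝ) * h ≤ 1 - h := by nlinarith
    simp only [hD]
    nlinarith
  -- the scheme, rewritten in terms of v
  have hscheme : ∀ i ∈ Ico 1 M,
      (f' i - f i) / τ = (v (i+1) - 2 * v i + v (i-1)) / h ^ 2 := by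
    intro i hi
    rw [mem_Ico] at hi
    have h2 : i ≤ M - 1 := by omega
    have e1 : ((i+1:ℕ):ℝ) = (i:ℝ) + 1 := by push_cast; ring
    have e2 : ((i-1:ℕ):ℝ) = (i:ℝ) - 1 := by
      rw [Nat.cast_sub hi.1]; norm_num
    simp only [hv, hD, e1, e2]
    linear_combination heq i hi.1 h2
  -- sine weights
  set s : ℕ → ℝ := fun i => Real.sin ((i:ℝ) * θ) with hs
  have hs0 : s 0 = 0 := by simp [hs]
  have hsM : s M = 0 := by
    simp only [hs, hθ]
    rw [mul_div_cancel₀ _ (ne_of_gt hM0)]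
    exact Real.sin_pi
  have hspos : ∀ i, 1 ≤ i → i < M → 0 < s i := by
    intro i h1 h2
    apply Real.sin_pos_of_pos_of_lt_pi
    · have : (1:ℝ) ≤ (i:ℝ) := by exact_mod_cast h1
      nlinarith
    · have : (i:ℝ) < (M:ℝ) := by exact_mod_cast h2
      have e : (M:ℝ) * θ = Real.pi := by rw [hθ]; field_simp
      have := mul_lt_mul_of_pos_right this hθpos
      rw [e] at this
      exact this
  have htrig : ∀ i : ℕ, 1 ≤ i → s (i+1) + s (i-1) = 2 * c * s i := by
    intro i h1
    have e2 : ((i-1:ℕ):ℝ) = (i:ℝ) - 1 := by rw [Nat.cast_sub h1]; norm_num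
    simp only [hs, e2]
    push_cast
    rw [show ((i:ℝ) + 1) * θ = (i:ℝ) * θ + θ from by ring,
      show ((i:ℝ) - 1) * θ = (i:ℝ) * θ - θ from by ring,
      Real.sin_add, Real.sin_sub, hc]
    ring
  -- sums
  set Q : ℝ := ∑ i ∈ Ico 1 M, v i ^ 2 with hQdef
  set S : ℝ := ∑ i ∈ Ico 1 (M-1), v i * v (i+1) with hSdef
  have hQ0 : 0 ≤ Q := Finset.sum_nonneg fun i _ => sq_nonneg _
  have hM1 : M - 1 + 1 = M := by omega
  -- discrete Poincaré (inner product form): S ≤ c * Q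
  have hSQ : S ≤ c * Q := by
    have step1 : S ≤ ∑ i ∈ Ico 1 (M-1),
        (s (i+1) / s i * v i ^ 2 + s i / s (i+1) * v (i+1) ^ 2) / 2 := by
      apply Finset.sum_le_sum
      intro i hi
      rw [mem_Ico] at hi
      exact scheme3_amgm _ _ _ _ (hspos i hi.1 (by omega)) (hspos (i+1) (by omega) (by omega))
    have split : ∑ i ∈ Ico 1 (M-1),
        (s (i+1) / s i * v i ^ 2 + s i / s (i+1) * v (i+1) ^ 2) / 2
        = ((∑ i ∈ Ico 1 (M-1), s (i+1) / s i * v i ^ 2)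
          + ∑ i ∈ Ico 1 (M-1), s i / s (i+1) * v (i+1) ^ 2) / 2 := by
      rw [← Finset.sum_add_distrib, ← Finset.sum_div]
    have t1 : ∑ i ∈ Ico 1 M, s (i+1) / s i * v i ^ 2
        = ∑ i ∈ Ico 1 (M-1), s (i+1) / s i * v i ^ 2 := by
      have := Finset.sum_Ico_succ_top (show 1 ≤ M - 1 from by omega)
        (fun i => s (i+1) / s i * v i ^ 2)
      rw [hM1] at this
      rw [this, hsM]
      simp
    have t2 : ∑ i ∈ Ico 1 (M-1), s i / s (i+1) * v (i+1) ^ 2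
        = ∑ i ∈ Ico 2 M, s (i-1) / s i * v i ^ 2 := by
      have := scheme3_shift M (fun j => s (j-1) / s j * v j ^ 2)
      simp only [Nat.add_sub_cancel] at this
      exact this
    have t3 : ∑ i ∈ Ico 1 M, s (i-1) / s i * v i ^ 2
        = ∑ i ∈ Ico 2 M, s (i-1) / s i * v i ^ 2 := by
      rw [Finset.sum_eq_sum_Ico_succ_bot (show 1 < M from by omega)
        (fun i => s (i-1) / s i * v i ^ 2)]
      norm_num [hs0]
    have comb : (∑ i ∈ Ico 1 M, s (i+1) / s i * v i ^ 2)
        + ∑ i ∈ Ico 1 M, s (i-1) / s i * v i ^ 2 = 2 * c * Q := by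
      rw [← Finset.sum_add_distrib, hQdef, Finset.mul_sum]
      apply Finset.sum_congr rfl
      intro i hi
      rw [mem_Ico] at hi
      have hsi : s i ≠ 0 := ne_of_gt (hspos i hi.1 hi.2)
      have := htrig i hi.1
      field_simp
      linear_combination v i ^ 2 * this
    calc S ≤ _ := step1
      _ = _ := split
      _ = 2 * c * Q / 2 := by rw [← t1, t2, ← t3, comb]
      _ = c * Q := by ring
  -- summation by parts: the discrete energy identity
  have hexp : ∑ i ∈ Ico 1 M, (v (i+1) - 2 * v i + v (i-1)) * v i = 2 * S - 2 * Q := by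
    have e : ∀ i, (v (i+1) - 2 * v i + v (i-1)) * v i
        = v i * v (i+1) + v (i-1) * v i - 2 * v i ^ 2 := fun i => by ring
    rw [Finset.sum_congr rfl fun i _ => e i, Finset.sum_sub_distrib, Finset.sum_add_distrib]
    have u1 : ∑ i ∈ Ico 1 M, v i * v (i+1) = S := by
      have := Finset.sum_Ico_succ_top (show 1 ≤ M - 1 from by omega)
        (fun i => v i * v (i+1))
      rw [hM1] at this
      rw [this, hvM]
      simp [hSdef]
    have u2 : ∑ i ∈ Ico 1 M, v (i-1) * v i = S := by
      rw [Finset.sum_eq_sum_Ico_succ_bot (show 1 < M from by omega)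
        (fun i => v (i-1) * v i)]
      have hsh := scheme3_shift M (fun j => v (j-1) * v j)
      simp only [Nat.add_sub_cancel] at hsh
      rw [← hsh]
      norm_num [hv0, hSdef]
    rw [u1, u2, ← Finset.mul_sum, ← hQdef]
    ring
  -- multiply the scheme by `v i` and sum
  have hsum : ∑ i ∈ Ico 1 M, (f' i - f i) * v i / τ = (2 * S - 2 * Q) / h ^ 2 := by
    rw [← hexp, Finset.sum_div]
    apply Finset.sum_congr rfl
    intro i hi
    linear_combination v i * hscheme i hi
  -- weighted energies
  set A' : ℝ := ∑ i ∈ Ico 1 M, D i * f' i ^ 2 with hA'def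
  set A : ℝ := ∑ i ∈ Ico 1 M, D i * f i ^ 2 with hAdef
  have hQlb : h * (1 - h) * A' ≤ Q := by
    rw [hA'def, Finset.mul_sum, hQdef]
    apply Finset.sum_le_sum
    intro i hi
    have hlb := hDlb i hi
    have hD0 : (0:ℝ) ≤ D i := le_trans (by positivity) hlb
    have key : 0 ≤ D i * (D i - h * (1 - h)) * f' i ^ 2 :=
      mul_nonneg (mul_nonneg hD0 (by linarith)) (sq_nonneg _)
    simp only [hv]
    nlinarith [key]
  have hLlb : (A' - A) / (2 * τ) ≤ ∑ i ∈ Ico 1 M, (f' i - f i) * v i / τ := by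
    rw [hA'def, hAdef, ← Finset.sum_sub_distrib, Finset.sum_div]
    apply Finset.sum_le_sum
    intro i hi
    have hlb := hDlb i hi
    have hD0 : (0:ℝ) ≤ D i := le_trans (by positivity) hlb
    rw [div_le_div_iff₀ (by positivity) hτ]
    simp only [hv]
    nlinarith [mul_nonneg hD0 (sq_nonneg (f' i - f i)), hτ]
  -- combine
  have hlamQ : (2 * S - 2 * Q) / h ^ 2 ≤ -(lam0 * (h * (1 - h)) * A') := by
    have e1 : (2 * S - 2 * Q) / h ^ 2 ≤ (2 * (c * Q) - 2 * Q) / h ^ 2 := by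
      apply div_le_div_of_nonneg_right ?_ (by positivity)
      · linarith
    have e2 : (2 * (c * Q) - 2 * Q) / h ^ 2 = -lam0 * Q := by
      have hne : h ^ 2 ≠ 0 := by positivity
      field_simp
      linear_combination Q * hlamc
    have e3 : -lam0 * Q ≤ -lam0 * (h * (1 - h) * A') := by
      nlinarith [mul_le_mul_of_nonneg_left hQlb (le_of_lt hlampos)]
    calc (2 * S - 2 * Q) / h ^ 2 ≤ _ := e1
      _ = -lam0 * Q := e2
      _ ≤ -lam0 * (h * (1 - h) * A') := e3
      _ = -(lam0 * (h * (1 - h)) * A') := by ring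
  have hmain : (A' - A) / (2 * τ) ≤ -(lam0 * (h * (1 - h)) * A') :=
    le_trans hLlb (le_of_eq hsum) |>.trans hlamQ
  have h2' : A' - A ≤ -(lam0 * (h * (1 - h)) * A') * (2 * τ) :=
    (div_le_iff₀ (by positivity)).mp hmain
  have h3 : (1 + 2 * τ * lam0 * (h * (1 - h))) * A' ≤ A := by nlinarith [h2']
  have hKpos : 0 < 1 + 2 * τ * lam0 * (h * (1 - h)) := by
    have := mul_pos (mul_pos (mul_pos (show (0:ℝ) < 2 from by norm_num) hτ) hlampos)
      (mul_pos hhpos h1h)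
    linarith
  have g1 : ∑ i ∈ Finset.Ico 1 M, ((i : ℝ) * h * (1 - (i : ℝ) * h)) * f' i ^ 2 * h
      = A' * h := by
    rw [hA'def, Finset.sum_mul]
  have g2 : ∑ i ∈ Finset.Ico 1 M, ((i : ℝ) * h * (1 - (i : ℝ) * h)) * f i ^ 2 * h
      = A * h := by
    rw [hAdef, Finset.sum_mul]
  rw [g1, g2, inv_mul_eq_div, le_div_iff₀ hKpos]
  nlinarith [mul_le_mul_of_nonneg_right h3 (le_of_lt hhpos)]
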